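/- Let G be a finite simple graph with maximum degree Δ, and suppose the edges of G are colored with N colors so that (1) at every vertex each color appears on at most η incident edges, (2) there is no properly bichromatic cycle, and (3) there is no monochromatic cycle. Then G admits a proper acyclic edge coloring with ηN colors (a proper edge coloring with no properly bichromatic cycle). -/

import Mathlib

open SimpleGraph Finset

private lemma exists_leaf {V : Type*} [Fintype V] (H : SimpleGraph V) (hac : H.IsAcyclic)
    {u0 v0 : V} (h0 : H.Adj u0 v0) :
    ∃ v w : V, H.Adj v w ∧ ∀ x, H.Adj v x → x = w := by
  classical
  set P : ℕ → Prop := fun n =>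
    ∃ (u v : V) (p : H.Walk u v), p.IsPath ∧ p.length = n with hPdef
  have h1 : P 1 := ⟨u0, v0, (SimpleGraph.Path.singleton h0).1,
    (SimpleGraph.Path.singleton h0).2, rfl⟩
  have hbd : ∀ n, P n → n ≤ Fintype.card V := by
    rintro n ⟨u, v, p, hp, rfl⟩
    exact hp.length_lt.le
  set m := Nat.findGreatest P (Fintype.card V) with hm
  have hPm : P m := Nat.findGreatest_spec (hbd 1 h1) h1
  have hmax : ∀ k, P k → k ≤ m := fun k hk => Nat.le_findGreatest (hbd k hk) hk
  obtain ⟨u, v, p, hp, hlen⟩ := hPm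
  have hm1 : 1 ≤ m := hmax 1 h1
  have hrnil : ¬ p.reverse.Nil := by
    rw [SimpleGraph.Walk.not_nil_iff_lt_length, SimpleGraph.Walk.length_reverse, hlen]
    omega
  obtain ⟨y, hady, q, hq⟩ := SimpleGraph.Walk.not_nil_iff.mp hrnil
  have hrpath : p.reverse.IsPath := hp.reverse
  refine ⟨v, y, hady, ?_⟩
  intro x hvx
  by_contra hxy
  by_cases hmem : x ∈ p.reverse.support
  · -- takeUntil gives a path from v to x; by uniqueness it is the singleton
    set s := p.reverse.takeUntil x hmem with hs
    have hspath : s.IsPath := hrpath.takeUntil hmem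
    have huniq := hac.path_unique ⟨s, hspath⟩ (SimpleGraph.Path.singleton hvx)
    have hs' : s = SimpleGraph.Walk.cons hvx SimpleGraph.Walk.nil :=
      congrArg Subtype.val huniq
    have hspec := SimpleGraph.Walk.take_spec p.reverse hmem
    rw [← hs, hs'] at hspec
    have hx1 : p.reverse.getVert 1 = x := by
      rw [← hspec]
      simp [SimpleGraph.Walk.cons_append, SimpleGraph.Walk.getVert_cons_succ]
    have hy1 : p.reverse.getVert 1 = y := by
      rw [hq]
      simp [SimpleGraph.Walk.getVert_cons_succ]
    exact hxy (hx1 ▸ hy1 ▸ rfl)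
  · have hcons : (SimpleGraph.Walk.cons hvx.symm p.reverse).IsPath :=
      hrpath.cons hmem
    have : m + 1 ≤ m := by
      have := hmax (m+1) ⟨x, u, _, hcons, by
        simp [SimpleGraph.Walk.length_cons, SimpleGraph.Walk.length_reverse, hlen]⟩
      exact this
    omega

private lemma forest_color {V : Type*} [Fintype V] [DecidableEq V] (η : ℕ) (hη : 0 < η) :
    ∀ (n : ℕ) (H : SimpleGraph V) [DecidableRel H.Adj], H.edgeFinset.card ≤ n →
    H.IsAcyclic → (∀ v, H.degree v ≤ η) →
    ∃ d : Sym2 V → Fin η, ∀ e₁ ∈ H.edgeSet, ∀ e₂ ∈ H.edgeSet, e₁ ≠ e₂ →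
      (∃ v : V, v ∈ e₁ ∧ v ∈ e₂) → d e₁ ≠ d e₂ := by
  intro n
  induction n with
  | zero =>
    intro H _ hcard _ _
    refine ⟨fun _ => ⟨0, hη⟩, ?_⟩
    intro e₁ he₁
    exfalso
    have : e₁ ∈ H.edgeFinset := by rwa [mem_edgeFinset]
    simp [Finset.card_eq_zero.mp (Nat.le_zero.mp hcard)] at this
  | succ n ih =>
    intro H _ hcard hac hdeg
    by_cases hE : H.edgeFinset = ∅
    · refine ⟨fun _ => ⟨0, hη⟩, ?_⟩
      intro e₁ he₁
      exfalso
      have : e₁ ∈ H.edgeFinset := by rwa [mem_edgeFinset]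
      simp [hE] at this
    · obtain ⟨e, he⟩ := Finset.nonempty_of_ne_empty hE
      rw [mem_edgeFinset] at he
      obtain ⟨a, b, hab⟩ : ∃ a b, H.Adj a b := by
        induction e using Sym2.ind with
        | _ a b => exact ⟨a, b, (H.mem_edgeSet).mp he⟩
      obtain ⟨v, w, hvw, huniq⟩ := exists_leaf H hac hab
      set H' := H.deleteEdges {s(v,w)} with hH'
      haveI : DecidableRel H'.Adj := fun a b =>
        decidable_of_iff _ (deleteEdges_adj (G := H) (s := {s(v,w)}) (v := a) (w := b)).symm
      have hle : H' ≤ H := H.deleteEdges_le _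
      have hEF : H'.edgeFinset = H.edgeFinset.erase s(v,w) := by
        ext f
        rw [mem_edgeFinset, Finset.mem_erase, mem_edgeFinset, hH', edgeSet_deleteEdges]
        simp [and_comm]
      have hcard' : H'.edgeFinset.card ≤ n := by
        rw [hEF]
        have hmem : s(v,w) ∈ H.edgeFinset := by rwa [mem_edgeFinset, mem_edgeSet]
        have := Finset.card_erase_of_mem hmem
        omega
      have hac' : H'.IsAcyclic := fun a cwalk hc => hac (cwalk.mapLe hle) (hc.mapLe hle)
      have hdeg' : ∀ x, H'.degree x ≤ η := by
        intro x
        refine le_trans (Finset.card_le_card ?_) (hdeg x)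
        intro z hz
        rw [mem_neighborFinset] at hz ⊢
        exact hle hz
      obtain ⟨d', hd'⟩ := ih H' hcard' hac' hdeg'
      set used : Finset (Fin η) := (H'.incidenceFinset w).image d' with hused
      have hwv : v ∈ H.neighborFinset w := by rw [mem_neighborFinset]; exact hvw.symm
      have hcard_used : used.card < η := by
        have h1 : used.card ≤ H'.degree w := by
          rw [← card_incidenceFinset_eq_degree]
          exact Finset.card_image_le
        have h2 : H'.neighborFinset w ⊆ (H.neighborFinset w).erase v := by
          intro z hz
          rw [mem_neighborFinset, hH', deleteEdges_adj] at hz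
          rw [Finset.mem_erase, mem_neighborFinset]
          refine ⟨?_, hz.1⟩
          rintro rfl
          exact hz.2 (by rw [Sym2.eq_swap]; exact Set.mem_singleton _)
        have h3 : H'.degree w ≤ H.degree w - 1 := by
          have := Finset.card_le_card h2
          rw [Finset.card_erase_of_mem hwv] at this
          exact this
        have h4 : 0 < H.degree w := by
          rw [← card_neighborFinset_eq_degree, card_pos]
          exact ⟨v, hwv⟩
        have h5 := hdeg w
        omega
      have hcompl : usedᶜ.Nonempty := by
        rw [← Finset.card_pos, Finset.card_compl, Fintype.card_fin]
        omega
      obtain ⟨α, hα⟩ := hcompl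
      have hαnot : α ∉ used := Finset.mem_compl.mp hα
      refine ⟨fun f => if f = s(v,w) then α else d' f, ?_⟩
      have key : ∀ f ∈ H.edgeSet, f ≠ s(v,w) → (∃ z : V, z ∈ f ∧ z ∈ s(v,w)) →
          α ≠ d' f := by
        rintro f hf hfne ⟨z, hzf, hzvw⟩
        rw [Sym2.mem_iff] at hzvw
        rcases hzvw with rfl | rfl
        · -- z = v : impossible since v has unique neighbor w
          exfalso
          induction f using Sym2.ind with
          | _ a b =>
            rw [mem_edgeSet] at hf
            rw [Sym2.mem_iff] at hzf
            rcases hzf with rfl | rfl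
            · exact hfne (by rw [huniq b hf])
            · exact hfne (by rw [huniq a hf.symm, Sym2.eq_swap])
        · -- z = w : f is an H'-edge incident to w, so d' f ∈ used
          intro hcontra
          apply hαnot
          rw [hused, Finset.mem_image]
          refine ⟨f, ?_, hcontra.symm⟩
          rw [mem_incidenceFinset]
          refine ⟨?_, hzf⟩
          rw [hH', edgeSet_deleteEdges]
          exact ⟨hf, by simpa using hfne⟩
      intro e₁ he₁ e₂ he₂ hne hshare
      by_cases h1 : e₁ = s(v,w) <;> by_cases h2 : e₂ = s(v,w)
      · exact absurd (h1.trans h2.symm) hne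
      · simp only [h1, if_pos rfl, if_neg h2]
        exact key e₂ he₂ h2 (by obtain ⟨z, hz1, hz2⟩ := hshare; exact ⟨z, hz2, h1 ▸ hz1⟩)
      · simp only [h2, if_pos rfl, if_neg h1]
        exact (key e₁ he₁ h1 (by obtain ⟨z, hz1, hz2⟩ := hshare; exact ⟨z, hz1, h2 ▸ hz2⟩)).symm
      · simp only [if_neg h1, if_neg h2]
        refine hd' e₁ ?_ e₂ ?_ hne hshare
        · rw [hH', edgeSet_deleteEdges]; exact ⟨he₁, by simpa using h1⟩
        · rw [hH', edgeSet_deleteEdges]; exact ⟨he₂, by simpa using h2⟩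

/-- If the edges of `G` are colored with `N` colors so that (1) each color
appears at most `η` times among the edges incident to any vertex, (2) there is
no properly bichromatic (alternating two-colored) cycle, and (3) there is no
monochromatic cycle, then `G` has a proper acyclic edge coloring with `η·N`
colors. -/
theorem stmt_14 {V : Type*} [Fintype V] [DecidableEq V]
    (G : SimpleGraph V) [DecidableRel G.Adj]
    (N η : ℕ) (hη : 2 ≤ η) (c : Sym2 V → Fin N)
    (h1 : ∀ (v : V) (col : Fin N),
      ((G.incidenceFinset v).filter (fun f => c f = col)).card ≤ η)
    (h2 : ¬ ∃ (v : V) (w : G.Walk v v), w.IsCycle ∧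
      ∃ a b : Fin N, a ≠ b ∧ ∀ (i : ℕ) (hi : i < w.edges.length),
        c (w.edges.get ⟨i, hi⟩) = if i % 2 = 0 then a else b)
    (h3 : ¬ ∃ (v : V) (w : G.Walk v v), w.IsCycle ∧
      ∃ a : Fin N, ∀ f ∈ w.edges, c f = a) :
    ∃ c' : Sym2 V → Fin (η * N),
      (∀ e₁ ∈ G.edgeSet, ∀ e₂ ∈ G.edgeSet, e₁ ≠ e₂ →
        (∃ v : V, v ∈ e₁ ∧ v ∈ e₂) → c' e₁ ≠ c' e₂) ∧
      ¬ ∃ (v : V) (w : G.Walk v v), w.IsCycle ∧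
        ∃ a b : Fin (η * N), a ≠ b ∧ ∀ (i : ℕ) (hi : i < w.edges.length),
          c' (w.edges.get ⟨i, hi⟩) = if i % 2 = 0 then a else b := by
  classical
  have hη0 : 0 < η := by omega
  -- per-color subgraphs are forests of max degree ≤ η
  have hforest : ∀ col : Fin N, ∃ d : Sym2 V → Fin η, ∀ e₁ ∈ G.edgeSet, ∀ e₂ ∈ G.edgeSet,
      e₁ ≠ e₂ → c e₁ = col → c e₂ = col → (∃ v : V, v ∈ e₁ ∧ v ∈ e₂) → d e₁ ≠ d e₂ := by
    intro col
    set H : SimpleGraph V :=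
      { Adj := fun a b => G.Adj a b ∧ c s(a,b) = col
        symm := by
          constructor
          rintro a b ⟨h, hc⟩
          exact ⟨h.symm, by rwa [Sym2.eq_swap]⟩
        loopless := ⟨fun a h => G.loopless.irrefl a h.1⟩ } with hH
    haveI : DecidableRel H.Adj := fun a b => instDecidableAnd
    have hHG : H ≤ G := fun a b h => h.1
    have hedge : ∀ f, f ∈ H.edgeSet ↔ f ∈ G.edgeSet ∧ c f = col := by
      intro f
      induction f using Sym2.ind with
      | _ a b => rw [mem_edgeSet, mem_edgeSet]
    have hac : H.IsAcyclic := by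
      intro a wlk hcyc
      refine h3 ⟨a, wlk.mapLe hHG, hcyc.mapLe hHG, col, ?_⟩
      intro f hf
      have hf' : f ∈ wlk.edges := by
        simpa [Walk.mapLe, Walk.edges_map, Walk.edges_mapLe_eq_edges,
          Sym2.map_id'] using hf
      exact ((hedge f).mp (wlk.edges_subset_edgeSet hf')).2
    have hdeg : ∀ v, H.degree v ≤ η := by
      intro v
      rw [← card_neighborFinset_eq_degree]
      refine le_trans (Finset.card_le_card_of_injOn (fun x => s(v,x)) ?_ ?_) (h1 v col)
      · intro x hx
        rw [Finset.mem_coe, mem_neighborFinset] at hx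
        rw [Finset.mem_coe, Finset.mem_filter, mem_incidenceFinset]
        exact ⟨⟨(mem_edgeSet G).mpr hx.1, Sym2.mem_mk_left v x⟩, hx.2⟩
      · intro x _ y _ hxy
        exact (Sym2.congr_right).mp hxy
    obtain ⟨d, hd⟩ := forest_color η hη0 H.edgeFinset.card H le_rfl hac hdeg
    refine ⟨d, ?_⟩
    intro e₁ he₁ e₂ he₂ hne hc₁ hc₂ hsh
    exact hd e₁ ((hedge e₁).mpr ⟨he₁, hc₁⟩) e₂ ((hedge e₂).mpr ⟨he₂, hc₂⟩) hne hsh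
  choose d hd using hforest
  set c' : Sym2 V → Fin (η * N) := fun e => finProdFinEquiv (d (c e) e, c e) with hc'
  have hsnd : ∀ e, (finProdFinEquiv.symm (c' e)).2 = c e := by
    intro e; rw [hc']; simp
  refine ⟨c', ?_, ?_⟩
  · intro e₁ he₁ e₂ he₂ hne hsh hcontra
    have := finProdFinEquiv.injective (hcontra : c' e₁ = c' e₂)
    rw [Prod.mk.injEq] at this
    obtain ⟨hdd, hcc⟩ := this
    refine hd (c e₁) e₁ he₁ e₂ he₂ hne rfl hcc.symm hsh ?_
    rw [← hcc] at hdd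
    exact hdd
  · rintro ⟨v, w, hw, a, b, hab, halt⟩
    set n₁ : Fin N := (finProdFinEquiv.symm a).2 with hn₁
    set n₂ : Fin N := (finProdFinEquiv.symm b).2 with hn₂
    have hcw : ∀ (i : ℕ) (hi : i < w.edges.length),
        c (w.edges.get ⟨i, hi⟩) = if i % 2 = 0 then n₁ else n₂ := by
      intro i hi
      have := halt i hi
      rw [← hsnd (w.edges.get ⟨i, hi⟩), this]
      by_cases h : i % 2 = 0 <;> simp [h, hn₁, hn₂]
    by_cases hn : n₁ = n₂
    · refine h3 ⟨v, w, hw, n₁, ?_⟩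
      intro f hf
      obtain ⟨⟨i, hi⟩, rfl⟩ := List.mem_iff_get.mp hf
      rw [hcw i hi]
      by_cases h : i % 2 = 0 <;> simp [h, hn]
    · exact h2 ⟨v, w, hw, n₁, n₂, hn, hcw⟩
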